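/- Let κ be a regular uncountable cardinal and assume principle C⁻(κ). Then every first countable, separable, Hausdorff topological space X with |X| = κ contains two disjoint open sets U and V, each of cardinality κ. -/

import Mathlib

open Cardinal

/-- `C` is closed and unbounded (club) in the ordinal `o`. -/
def ClubIn (o : Ordinal) (C : Set Ordinal) : Prop :=
  C ⊆ Set.Iio o ∧ (∀ α < o, ∃ β ∈ C, α < β) ∧
    ∀ α < o, 0 < α → (∀ β < α, ∃ γ ∈ C, β < γ ∧ γ < α) → α ∈ C

/-- `S` is a stationary subset of the ordinal `o`: it meets every club subset of `o`. -/
def StationaryIn (o : Ordinal) (S : Set Ordinal) : Prop :=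
  S ⊆ Set.Iio o ∧ ∀ C, ClubIn o C → (S ∩ C).Nonempty

/-- `S` is a cofinal (unbounded) subset of the ordinal `o`. -/
def CofinalIn (o : Ordinal) (S : Set Ordinal) : Prop :=
  S ⊆ Set.Iio o ∧ ∀ α < o, ∃ β ∈ S, α < β

/-- For a matrix `A` of subsets of `ℕ`, a finite sequence `t ∈ ω^{<ω}` and
`s : {0,…,|t|-1} → Ordinal`, this is `A[s,t] = ⋂_{i<|t|} A(s i, t i)`. -/
def MatInt (A : Ordinal → ℕ → Set ℕ) (t : List ℕ) (s : Fin t.length → Ordinal) : Set ℕ :=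
  ⋂ i, A (s i) (t.get i)

/-- Principle C⁻(κ). -/
def PrincipleCminus (κ : Cardinal) : Prop :=
  ∀ (T : Set (List ℕ)) (A : Ordinal → ℕ → Set ℕ),
    (∃ S : Set Ordinal, CofinalIn κ.ord S ∧
      ∀ t ∈ T, ∀ s : Fin t.length → Ordinal, Function.Injective s →
        (∀ i, s i ∈ S) → (MatInt A t s).Nonempty) ∨
    (∃ t ∈ T, ∃ D : Fin t.length → Set Ordinal,
      (∀ i, CofinalIn κ.ord (D i)) ∧
      ∀ s : Fin t.length → Ordinal, Function.Injective s →
        (∀ i, s i ∈ D i) → MatInt A t s = ∅)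

lemma cofinal_mk {κ : Cardinal.{0}} (hreg : κ.IsRegular) {E : Set Ordinal.{0}}
    (hE : CofinalIn κ.ord E) : #E = Cardinal.lift.{1, 0} κ := by
  apply le_antisymm
  · calc #E ≤ #(Set.Iio κ.ord) := Cardinal.mk_le_mk_of_subset hE.1
      _ = Cardinal.lift.{1,0} κ := by rw [Ordinal.mk_Iio_ordinal, Cardinal.card_ord]
  · by_contra h
    push_neg at h
    set g : ↥E → (κ.ord).ToType := fun x => (Ordinal.ToType.mk (o := κ.ord)) ⟨x.1, hE.1 x.2⟩ with hgdef
    have hginj : Function.Injective g := by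
      intro a b hab
      have h2 := ((Ordinal.ToType.mk (o := κ.ord))).injective hab
      exact Subtype.ext (Subtype.mk_eq_mk.mp h2)
    set E' : Set (κ.ord).ToType := Set.range g with hE'def
    set f : ↥E' → Ordinal.{0} := fun y => (((Ordinal.ToType.mk (o := κ.ord))).symm y.1).1 with hfdef
    have hfg : ∀ x : ↥E, f ⟨g x, Set.mem_range_self x⟩ = x.1 := by
      intro x
      simp [hfdef, hgdef]
    have hfE : ∀ y : ↥E', f y ∈ E := by
      rintro ⟨y, x, rfl⟩
      rw [hfg x]; exact x.2
    have hcard : #E' < κ := by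
      have h1 : Cardinal.lift.{1,0} #E' = #E := by
        have h3 := Cardinal.mk_range_eq_lift.{1,0,0} hginj
        simpa [hE'def] using h3
      rw [← Cardinal.lift_lt.{0,1}, h1]
      exact h
    have hsup : iSup f < κ.ord := by
      apply Ordinal.iSup_lt_ord _ (fun y => hE.1 (hfE y))
      rwa [hreg.cof_eq]
    obtain ⟨β, hβE, hβ⟩ := hE.2 (iSup f) hsup
    have : β ≤ iSup f := by
      have := Ordinal.le_iSup f ⟨g ⟨β, hβE⟩, Set.mem_range_self _⟩
      rwa [hfg ⟨β, hβE⟩] at this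
    exact absurd hβ (not_lt.mpr this)


universe u

/-- Under C⁻(κ), every first countable, separable, Hausdorff space of cardinality κ
contains two disjoint open sets, each of cardinality κ. -/
theorem statement_18 {X : Type u} [TopologicalSpace X] [T2Space X]
    [TopologicalSpace.SeparableSpace X] [FirstCountableTopology X]
    (κ : Cardinal.{0}) (hreg : κ.IsRegular) (hunc : ℵ₀ < κ)
    (hC : PrincipleCminus κ) (hX : #X = Cardinal.lift.{u, 0} κ) :
    ∃ U V : Set X, IsOpen U ∧ IsOpen V ∧ Disjoint U V ∧
      #U = Cardinal.lift.{u, 0} κ ∧ #V = Cardinal.lift.{u, 0} κ := by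
  classical
  have hκ0 : 0 < κ := lt_trans (by simp [Cardinal.aleph0_pos]) hunc
  have hord0 : (0 : Ordinal) < κ.ord := by
    have := Cardinal.ord_lt_ord.mpr hκ0
    simpa using this
  have hXne : Nonempty X := by
    rw [← Cardinal.mk_ne_zero_iff, hX]
    simp [Cardinal.lift_eq_zero]
    exact hκ0.ne'
  -- dense sequence
  set d : ℕ → X := TopologicalSpace.denseSeq X with hd_def
  have hd : DenseRange d := TopologicalSpace.denseRange_denseSeq X
  -- open neighborhood bases
  have hBex : ∀ x : X, ∃ B : ℕ → Set X, (∀ n, IsOpen (B n)) ∧ (∀ n, x ∈ B n) ∧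
      ∀ W : Set X, IsOpen W → x ∈ W → ∃ n, B n ⊆ W := by
    intro x
    obtain ⟨v, hv⟩ := (nhds x).exists_antitone_basis
    have key : ∀ n : ℕ, ∃ O : Set X, IsOpen O ∧ x ∈ O ∧ O ⊆ v n := by
      intro n
      have hvn : v n ∈ nhds x := hv.1.mem_of_mem trivial
      obtain ⟨O, hO1, hO2, hO3⟩ := mem_nhds_iff.mp hvn
      exact ⟨O, hO2, hO3, hO1⟩
    choose B hBo hBx hBs using key
    refine ⟨B, hBo, hBx, fun W hW hxW => ?_⟩
    obtain ⟨n, -, hn⟩ := hv.1.mem_iff.mp (hW.mem_nhds hxW)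
    exact ⟨n, (hBs n).trans hn⟩
  choose B hBo hBx hBb using hBex
  -- enumeration of X by ordinals below κ.ord
  have hIio : #(Set.Iio κ.ord) = Cardinal.lift.{1,0} κ := by
    rw [Ordinal.mk_Iio_ordinal, Cardinal.card_ord]
  have hequiv : Nonempty (↥(Set.Iio κ.ord) ≃ X) := by
    rw [← Cardinal.lift_mk_eq']
    rw [hIio, hX]
    simp [Cardinal.lift_lift]
  obtain ⟨e⟩ := hequiv
  set x_ : Ordinal → X := fun α => if h : α < κ.ord then e ⟨α, h⟩ else e ⟨0, hord0⟩ with hx_def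
  have hx_val : ∀ (α) (h : α < κ.ord), x_ α = e ⟨α, h⟩ := by
    intro α h; simp [hx_def, h]
  have hx_inj : Set.InjOn x_ (Set.Iio κ.ord) := by
    intro a ha b hb hab
    rw [hx_val a ha, hx_val b hb] at hab
    have := e.injective hab
    exact Subtype.mk_eq_mk.mp this
  -- the matrix
  set A : Ordinal → ℕ → Set ℕ := fun α n => {m | d m ∈ B (x_ α) n} with hA_def
  set T : Set (List ℕ) := {t | t.length = 2} with hT_def
  rcases hC T A with ⟨S, hScof, hS⟩ | ⟨t, ht, D, hDcof, hD⟩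
  · -- case 1: contradiction with Hausdorff
    exfalso
    obtain ⟨α, hαS, hα0⟩ := hScof.2 0 hord0
    have hα : α < κ.ord := hScof.1 hαS
    obtain ⟨β, hβS, hαβ⟩ := hScof.2 α hα
    have hβ : β < κ.ord := hScof.1 hβS
    have hne : x_ α ≠ x_ β := by
      intro hcon
      exact absurd (hx_inj hα hβ hcon) (ne_of_lt hαβ)
    obtain ⟨W₀, W₁, hW₀, hW₁, hxW₀, hxW₁, hdisj⟩ := t2_separation hne
    obtain ⟨n₀, hn₀⟩ := hBb (x_ α) W₀ hW₀ hxW₀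
    obtain ⟨n₁, hn₁⟩ := hBb (x_ β) W₁ hW₁ hxW₁
    set t : List ℕ := [n₀, n₁] with ht_def
    have htT : t ∈ T := by simp [hT_def, ht_def]
    set s : Fin t.length → Ordinal := fun i => if (i : ℕ) = 0 then α else β with hs_def
    have hsinj : Function.Injective s := by
      intro i j hij
      have hi2 : (i : ℕ) < 2 := i.2
      have hj2 : (j : ℕ) < 2 := j.2
      rcases (by omega : (i:ℕ) = 0 ∨ (i:ℕ) = 1) with hi | hi <;>
        rcases (by omega : (j:ℕ) = 0 ∨ (j:ℕ) = 1) with hj | hj <;>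
        simp [hs_def, hi, hj, -Fin.val_eq_zero_iff] at hij ⊢ <;>
        first
          | exact Fin.ext (hi.trans hj.symm)
          | exact absurd hij (ne_of_lt hαβ)
          | exact absurd hij.symm (ne_of_lt hαβ)
    have hsS : ∀ i, s i ∈ S := by
      intro i
      by_cases hi : (i : ℕ) = 0 <;> simp [hs_def, hi, hαS, hβS, -Fin.val_eq_zero_iff]
    obtain ⟨m, hm⟩ := hS t htT s hsinj hsS
    have hm0 : m ∈ A α n₀ := by
      have := Set.mem_iInter.mp hm ⟨0, by simp [ht_def]⟩
      simpa [hs_def, ht_def] using this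
    have hm1 : m ∈ A β n₁ := by
      have := Set.mem_iInter.mp hm ⟨1, by simp [ht_def]⟩
      simpa [hs_def, ht_def] using this
    have : d m ∈ W₀ ∩ W₁ := ⟨hn₀ hm0, hn₁ hm1⟩
    rw [Set.disjoint_iff_inter_eq_empty.mp hdisj] at this
    exact this
  · -- case 2: construct the open sets
    have hlen : t.length = 2 := ht
    set i₀ : Fin t.length := ⟨0, by omega⟩ with hi₀
    set i₁ : Fin t.length := ⟨1, by omega⟩ with hi₁
    set n₀ := t.get i₀ with hn₀
    set n₁ := t.get i₁ with hn₁
    -- key disjointness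
    have key : ∀ α ∈ D i₀, ∀ β ∈ D i₁, α ≠ β → B (x_ α) n₀ ∩ B (x_ β) n₁ = ∅ := by
      intro α hαD β hβD hαβ
      set s : Fin t.length → Ordinal := fun i => if (i : ℕ) = 0 then α else β with hs_def
      have hsinj : Function.Injective s := by
        intro i j hij
        have hi2 : (i : ℕ) < 2 := hlen ▸ i.2
        have hj2 : (j : ℕ) < 2 := hlen ▸ j.2
        rcases (by omega : (i:ℕ) = 0 ∨ (i:ℕ) = 1) with hi | hi <;>
          rcases (by omega : (j:ℕ) = 0 ∨ (j:ℕ) = 1) with hj | hj <;>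
          simp [hs_def, hi, hj] at hij ⊢ <;>
          first
            | exact Fin.ext (hi.trans hj.symm)
            | exact absurd hij hαβ
            | exact absurd hij.symm hαβ
      have hsD : ∀ i, s i ∈ D i := by
        intro i
        have hi2 : (i : ℕ) < 2 := hlen ▸ i.2
        rcases (by omega : (i:ℕ) = 0 ∨ (i:ℕ) = 1) with hi | hi
        · have : i = i₀ := Fin.ext (by simp [hi₀, hi])
          rw [this]; simpa [hs_def, hi₀] using hαD
        · have : i = i₁ := Fin.ext (by simp [hi₁, hi])
          rw [this]; simpa [hs_def, hi₁] using hβD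
      have hempty := hD s hsinj hsD
      by_contra hcon
      obtain ⟨z, hz⟩ := Set.nonempty_iff_ne_empty.mpr hcon
      obtain ⟨m, hmem⟩ := hd.exists_mem_open ((hBo (x_ α) n₀).inter (hBo (x_ β) n₁)) ⟨z, hz⟩
      have : m ∈ MatInt A t s := by
        apply Set.mem_iInter.mpr
        intro i
        have hi2 : (i : ℕ) < 2 := hlen ▸ i.2
        rcases (by omega : (i:ℕ) = 0 ∨ (i:ℕ) = 1) with hi | hi
        · have hii : i = i₀ := Fin.ext (by simp [hi₀, hi])
          rw [hii]
          simpa [hs_def, hi₀, hA_def, hn₀] using hmem.1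
        · have hii : i = i₁ := Fin.ext (by simp [hi₁, hi])
          rw [hii]
          simpa [hs_def, hi₁, hA_def, hn₁] using hmem.2
      rw [hempty] at this
      exact this
    have hliftunc : ℵ₀ ≤ Cardinal.lift.{1,0} κ := by
      have : Cardinal.lift.{1,0} ℵ₀ ≤ Cardinal.lift.{1,0} κ := Cardinal.lift_le.mpr hunc.le
      simpa using this
    obtain ⟨E₀, E₁, hE₀sub, hE₁sub, hEdisj, hE₀card, hE₁card⟩ :
        ∃ E₀ E₁ : Set Ordinal, E₀ ⊆ D i₀ ∧ E₁ ⊆ D i₁ ∧ Disjoint E₀ E₁ ∧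
          Cardinal.lift.{1,0} κ ≤ #E₀ ∧ Cardinal.lift.{1,0} κ ≤ #E₁ := by
      by_cases hdiff : Cardinal.lift.{1,0} κ ≤ #(↥(D i₀ \ D i₁))
      · exact ⟨D i₀ \ D i₁, D i₁, Set.diff_subset, subset_rfl, Set.disjoint_sdiff_left,
          hdiff, (cofinal_mk hreg (hDcof i₁)).ge⟩
      · push_neg at hdiff
        set W : Set Ordinal := D i₀ ∩ D i₁ with hW_def
        have hWcard : #W = Cardinal.lift.{1,0} κ := by
          apply le_antisymm
          · calc #W ≤ #(D i₀) := Cardinal.mk_le_mk_of_subset Set.inter_subset_left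
              _ = Cardinal.lift.{1,0} κ := cofinal_mk hreg (hDcof i₀)
          · by_contra hcon
            push_neg at hcon
            have hun : (D i₀ \ D i₁) ∪ (D i₀ ∩ D i₁) = D i₀ := Set.diff_union_inter _ _
            have hle := Cardinal.mk_union_le (D i₀ \ D i₁) (D i₀ ∩ D i₁)
            rw [hun] at hle
            have hlt : #(↥(D i₀ \ D i₁)) + #(↥(D i₀ ∩ D i₁)) < Cardinal.lift.{1,0} κ :=
              Cardinal.add_lt_of_lt hliftunc hdiff hcon
            rw [cofinal_mk hreg (hDcof i₀)] at hle
            exact absurd (hle.trans_lt hlt) (lt_irrefl _)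
        have hWW : #(↥W ⊕ ↥W) = #↥W := by
          rw [Cardinal.mk_sum, Cardinal.lift_id, hWcard, Cardinal.add_eq_self hliftunc]
        obtain ⟨φ⟩ := Cardinal.eq.mp hWW
        refine ⟨Subtype.val '' Set.range (φ ∘ Sum.inl), Subtype.val '' Set.range (φ ∘ Sum.inr),
          ?_, ?_, ?_, ?_, ?_⟩
        · exact (Subtype.coe_image_subset _ _).trans Set.inter_subset_left
        · exact (Subtype.coe_image_subset _ _).trans Set.inter_subset_right
        · rw [Set.disjoint_left]
          rintro a ⟨w1, ⟨v1, rfl⟩, rfl⟩ ⟨w2, ⟨v2, hv2⟩, hval⟩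
          simp only [Function.comp_apply] at hv2 hval
          have h7 : (φ (Sum.inr v2) : Ordinal) = (φ (Sum.inl v1) : Ordinal) := by
            rw [hv2]; exact hval
          simpa using φ.injective (Subtype.ext h7)
        · rw [Cardinal.mk_image_eq Subtype.val_injective,
            Cardinal.mk_range_eq _ (φ.injective.comp Sum.inl_injective), hWcard]
        · rw [Cardinal.mk_image_eq Subtype.val_injective,
            Cardinal.mk_range_eq _ (φ.injective.comp Sum.inr_injective), hWcard]
    have cardU : ∀ (E : Set Ordinal) (n : ℕ), E ⊆ Set.Iio κ.ord →
        Cardinal.lift.{1,0} κ ≤ #E → #(⋃ α ∈ E, B (x_ α) n) = Cardinal.lift.{u,0} κ := by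
      intro E n hEsub hEcard
      apply le_antisymm
      · exact (Cardinal.mk_set_le _).trans_eq hX
      · have himg : x_ '' E ⊆ ⋃ α ∈ E, B (x_ α) n := by
          rintro _ ⟨α, hα, rfl⟩
          exact Set.mem_biUnion hα (hBx (x_ α) n)
        have h1 : Cardinal.lift.{1} #(x_ '' E) = Cardinal.lift.{u} #E :=
          Cardinal.mk_image_eq_of_injOn_lift x_ E (hx_inj.mono hEsub)
        have h2 : Cardinal.lift.{u,1} (Cardinal.lift.{1,0} κ) ≤ Cardinal.lift.{u} #E :=
          Cardinal.lift_le.mpr hEcard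
        rw [← h1] at h2
        have h3 : Cardinal.lift.{1} #(x_ '' E) ≤ Cardinal.lift.{1} #(⋃ α ∈ E, B (x_ α) n) :=
          Cardinal.lift_le.mpr (Cardinal.mk_le_mk_of_subset himg)
        have h4 := h2.trans h3
        have h5 : Cardinal.lift.{u,1} (Cardinal.lift.{1,0} κ) =
            Cardinal.lift.{1,u} (Cardinal.lift.{u,0} κ) := by simp [Cardinal.lift_lift]
        rw [h5] at h4
        exact Cardinal.lift_le.mp h4
    have hE₀Iio : E₀ ⊆ Set.Iio κ.ord := hE₀sub.trans (hDcof i₀).1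
    have hE₁Iio : E₁ ⊆ Set.Iio κ.ord := hE₁sub.trans (hDcof i₁).1
    refine ⟨⋃ α ∈ E₀, B (x_ α) n₀, ⋃ β ∈ E₁, B (x_ β) n₁, ?_, ?_, ?_, ?_, ?_⟩
    · exact isOpen_biUnion fun _ _ => hBo _ _
    · exact isOpen_biUnion fun _ _ => hBo _ _
    · rw [Set.disjoint_left]
      intro z hzU hzV
      obtain ⟨α, hα, hz0⟩ := Set.mem_iUnion₂.mp hzU
      obtain ⟨β, hβ, hz1⟩ := Set.mem_iUnion₂.mp hzV
      have hαβ : α ≠ β := fun h => Set.disjoint_left.mp hEdisj hα (h ▸ hβ)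
      have hk := key α (hE₀sub hα) β (hE₁sub hβ) hαβ
      have : z ∈ B (x_ α) n₀ ∩ B (x_ β) n₁ := ⟨hz0, hz1⟩
      rw [hk] at this
      exact this
    · exact cardU E₀ n₀ hE₀Iio hE₀card
    · exact cardU E₁ n₁ hE₁Iio hE₁card
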